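/- For all u, w ∈ (0,1), letting z = √(w(1−u)) / (√(w(1−u)) + √(u(1−w))), one has H₂(u) + H₂(w) ≥ 2·(√(w(1−u)) + √(u(1−w)))² · H₂(z). -/

import Mathlib

open Real Finset Filter Set Topology

/-- Power series for `(1+d)·ln(1+d) + (1−d)·ln(1−d)`. -/
lemma hasSumF {d : ℝ} (hd : |d| < 1) :
    HasSum (fun k : ℕ => d ^ (2 * k + 2) / ((2 * k + 1) * (k + 1)))
      ((1 + d) * Real.log (1 + d) + (1 - d) * Real.log (1 - d)) := by
  obtain ⟨hd1, hd2⟩ := abs_lt.mp hd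
  have hd2' : |d ^ 2| < 1 := by
    rw [abs_pow]
    exact pow_lt_one₀ (abs_nonneg d) hd (by norm_num)
  have h1 := Real.hasSum_pow_div_log_of_abs_lt_one hd2'
  have h2 := (Real.hasSum_log_sub_log_of_abs_lt_one hd).mul_left d
  have h3 := h2.sub h1
  convert h3 using 1
  · rfl
  · funext k
    have hk1 : ((2 * k + 1 : ℕ) : ℝ) ≠ 0 := by positivity
    have hk2 : ((k : ℝ) + 1) ≠ 0 := by positivity
    field_simp
    ring
  · have e1 : (1 : ℝ) - d ^ 2 = (1 + d) * (1 - d) := by ring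
    rw [e1, Real.log_mul (by linarith) (by linarith)]
    ring

lemma csummable : Summable (fun k : ℕ => 1 / ((2 * (k : ℝ) + 1) * ((k : ℝ) + 1))) := by
  have hb : Summable (fun k : ℕ => 1 / ((k : ℝ) + 1) ^ 2) := by
    have := Real.summable_one_div_nat_pow.mpr (le_refl 2)
    have h2 := (summable_nat_add_iff 1).mpr this
    apply h2.congr
    intro n
    push_cast
    ring
  apply Summable.of_nonneg_of_le (fun k => by positivity) (fun k => ?_) hb
  apply div_le_div_of_nonneg_left (by norm_num) (by positivity)
  nlinarith [sq_nonneg ((k : ℝ) + 1), Nat.cast_nonneg (α := ℝ) k]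

lemma csum_le : (∑' k : ℕ, 1 / ((2 * (k : ℝ) + 1) * ((k : ℝ) + 1))) ≤ 2 * Real.log 2 := by
  apply Real.tsum_le_of_sum_range_le (fun k => by positivity)
  intro n
  have key : ∀ d ∈ Set.Ioo (0 : ℝ) 1,
      (∑ k ∈ range n, d ^ (2 * k + 2) / ((2 * (k : ℝ) + 1) * ((k : ℝ) + 1)))
        ≤ (1 + d) * Real.log (1 + d) + (1 - d) * Real.log (1 - d) := by
    intro d hd
    have habs : |d| < 1 := by rw [abs_of_pos hd.1]; exact hd.2
    exact sum_le_hasSum (range n) (fun k _ => div_nonneg (pow_nonneg hd.1.le _) (by positivity)) (hasSumF habs)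
  have cont1 : Tendsto
      (fun d : ℝ => ∑ k ∈ range n, d ^ (2 * k + 2) / ((2 * (k : ℝ) + 1) * ((k : ℝ) + 1)))
      (𝓝[<] (1 : ℝ)) (𝓝 (∑ k ∈ range n, 1 / ((2 * (k : ℝ) + 1) * ((k : ℝ) + 1)))) := by
    have hc : Continuous
        (fun d : ℝ => ∑ k ∈ range n, d ^ (2 * k + 2) / ((2 * (k : ℝ) + 1) * ((k : ℝ) + 1))) := by
      apply continuous_finset_sum
      intro k _
      exact (continuous_pow _).div_const _
    have := hc.tendsto (1 : ℝ)
    simp only [one_pow] at this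
    exact this.mono_left nhdsWithin_le_nhds
  have cont2 : Tendsto (fun d : ℝ => (1 + d) * Real.log (1 + d) + (1 - d) * Real.log (1 - d))
      (𝓝[<] (1 : ℝ)) (𝓝 (2 * Real.log 2)) := by
    have hc : Continuous (fun d : ℝ => (1 + d) * Real.log (1 + d) + (1 - d) * Real.log (1 - d)) := by
      have g1 : Continuous fun d : ℝ => (1 + d) * Real.log (1 + d) :=
        Real.continuous_mul_log.comp (continuous_const.add continuous_id)
      have g2 : Continuous fun d : ℝ => (1 - d) * Real.log (1 - d) :=
        Real.continuous_mul_log.comp (continuous_const.sub continuous_id)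
      exact g1.add g2
    have := hc.tendsto (1 : ℝ)
    norm_num at this
    exact this.mono_left nhdsWithin_le_nhds
  refine le_of_tendsto_of_tendsto cont1 cont2 ?_
  filter_upwards [Ioo_mem_nhdsLT_of_mem (show (1:ℝ) ∈ Set.Ioc (0:ℝ) 1 by constructor <;> norm_num)]
    with d hd using key d hd

lemma lemma0 {d : ℝ} (h0 : 0 ≤ d) (h1 : d < 1) :
    (1 + d) * Real.log (1 + d) + (1 - d) * Real.log (1 - d) ≤ 2 * Real.log 2 * d ^ 2 := by
  have habs : |d| < 1 := by rw [abs_of_nonneg h0]; exact h1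
  have hF := hasSumF habs
  have hterm : ∀ k : ℕ, d ^ (2 * k + 2) / ((2 * (k : ℝ) + 1) * ((k : ℝ) + 1))
      ≤ d ^ 2 * (1 / ((2 * (k : ℝ) + 1) * ((k : ℝ) + 1))) := by
    intro k
    rw [mul_one_div]
    apply div_le_div_of_nonneg_right ?_ (by positivity)
    exact pow_le_pow_of_le_one h0 h1.le (by omega)
  have hsum2 : Summable (fun k : ℕ => d ^ 2 * (1 / ((2 * (k : ℝ) + 1) * ((k : ℝ) + 1)))) :=
    csummable.mul_left _
  have h := Summable.tsum_le_tsum hterm hF.summable hsum2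
  rw [hF.tsum_eq, tsum_mul_left] at h
  have h2 : d ^ 2 * (∑' k : ℕ, 1 / ((2 * (k : ℝ) + 1) * ((k : ℝ) + 1))) ≤ d ^ 2 * (2 * Real.log 2) :=
    mul_le_mul_of_nonneg_left csum_le (sq_nonneg d)
  linarith

lemma stepB {d : ℝ} (h0 : 0 ≤ d) (h1 : d < 1) :
    (1 - d ^ 2) * Real.log (1 - d ^ 2) ≤
      2 * d * ((1 - d) / 2 * Real.log ((1 - d) / 2) - (1 + d) / 2 * Real.log ((1 + d) / 2)) := by
  have hpd : (0 : ℝ) < 1 + d := by linarith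
  have hmd : (0 : ℝ) < 1 - d := by linarith
  have e1 : (1 : ℝ) - d ^ 2 = (1 + d) * (1 - d) := by ring
  rw [e1, Real.log_mul hpd.ne' hmd.ne', Real.log_div hmd.ne' two_ne_zero,
    Real.log_div hpd.ne' two_ne_zero]
  nlinarith [lemma0 h0 h1]

lemma core (p q : ℝ) (hp : 0 < p) (hq : 0 < q) (hpq : p + q ≤ 1) :
    (1 - (p - q) ^ 2) * Real.log (1 - (p - q) ^ 2) ≤
      2 * p * (q - p) * Real.log p + 2 * q * (p - q) * Real.log q := by
  wlog hle : q ≤ p with H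
  · have h := H q p hq hp (by linarith) (le_of_not_ge hle)
    have e : (q - p) ^ 2 = (p - q) ^ 2 := by ring
    rw [e] at h
    linarith
  rcases eq_or_lt_of_le hle with heq | hlt
  · rw [heq]
    simp
  · obtain ⟨d, hd⟩ : ∃ d, d = p - q := ⟨_, rfl⟩
    have hd0 : 0 < d := by rw [hd]; linarith
    have hd1 : d < 1 := by rw [hd]; linarith
    have hqle : q ≤ (1 - d) / 2 := by rw [hd]; linarith
    have hple : p ≤ (1 + d) / 2 := by rw [hd]; linarith
    have convA : (1 - d) / 2 * Real.log ((1 - d) / 2) + p * Real.log p ≤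
        q * Real.log q + (1 + d) / 2 * Real.log ((1 + d) / 2) := by
      have hcx := Real.convexOn_mul_log
      have hy : q < (1 + d) / 2 := lt_of_le_of_lt hqle (by linarith)
      have hden : 0 < (1 + d) / 2 - q := by linarith
      obtain ⟨t, ht⟩ : ∃ t, t = ((1 - d) / 2 - q) / ((1 + d) / 2 - q) := ⟨_, rfl⟩
      have ht0 : 0 ≤ t := ht ▸ div_nonneg (by linarith) hden.le
      have ht1 : t ≤ 1 := by rw [ht, div_le_one hden]; linarith
      have htmul : t * ((1 + d) / 2 - q) = (1 - d) / 2 - q := by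
        rw [ht]; exact div_mul_cancel₀ _ hden.ne'
      have e1 : (1 - t) * q + t * ((1 + d) / 2) = (1 - d) / 2 := by
        linear_combination htmul
      have e2 : t * q + (1 - t) * ((1 + d) / 2) = p := by
        linear_combination -htmul + hd
      have i1 := hcx.2 (Set.mem_Ici.mpr hq.le) (Set.mem_Ici.mpr (by linarith : (0:ℝ) ≤ (1+d)/2))
        (by linarith : (0:ℝ) ≤ 1 - t) ht0 (by ring)
      have i2 := hcx.2 (Set.mem_Ici.mpr hq.le) (Set.mem_Ici.mpr (by linarith : (0:ℝ) ≤ (1+d)/2))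
        ht0 (by linarith : (0:ℝ) ≤ 1 - t) (by ring)
      simp only [smul_eq_mul] at i1 i2
      rw [e1] at i1
      rw [e2] at i2
      linarith
    have hB := stepB hd0.le hd1
    have hA2 : 2 * d * ((1 - d) / 2 * Real.log ((1 - d) / 2) - (1 + d) / 2 * Real.log ((1 + d) / 2))
        ≤ 2 * d * (q * Real.log q - p * Real.log p) :=
      mul_le_mul_of_nonneg_left (by linarith) (by linarith)
    rw [show p - q = d from hd.symm]
    calc (1 - d ^ 2) * Real.log (1 - d ^ 2)
        ≤ 2 * d * ((1 - d) / 2 * Real.log ((1 - d) / 2) - (1 + d) / 2 * Real.log ((1 + d) / 2)) := hB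
      _ ≤ 2 * d * (q * Real.log q - p * Real.log p) := hA2
      _ = 2 * p * (q - p) * Real.log p + 2 * q * d * Real.log q := by rw [hd]; ring

lemma amgm_aux {x y t : ℝ} (hx : 0 ≤ x) (hy : 0 ≤ y) (ht : 0 ≤ t) (h : t ^ 2 = x * y) :
    t ≤ (x + y) / 2 := by
  nlinarith [sq_nonneg (x - y), sq_nonneg (x + y - 2 * t)]

/-- Binary entropy function. -/
noncomputable def H2 (x : ℝ) : ℝ := -x * Real.logb 2 x - (1 - x) * Real.logb 2 (1 - x)

set_option maxHeartbeats 2000000 in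
theorem stmt8 (u w : ℝ) (hu : u ∈ Set.Ioo (0 : ℝ) 1) (hw : w ∈ Set.Ioo (0 : ℝ) 1) :
    H2 u + H2 w ≥
      2 * (Real.sqrt (w * (1 - u)) + Real.sqrt (u * (1 - w))) ^ 2 *
        H2 (Real.sqrt (w * (1 - u)) /
          (Real.sqrt (w * (1 - u)) + Real.sqrt (u * (1 - w)))) := by
  obtain ⟨hu0, hu1⟩ := hu
  obtain ⟨hw0, hw1⟩ := hw
  have h1u : (0:ℝ) < 1 - u := by linarith
  have h1w : (0:ℝ) < 1 - w := by linarith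
  have hA : 0 < w * (1 - u) := by positivity
  have hB : 0 < u * (1 - w) := by positivity
  obtain ⟨a, hadef⟩ : ∃ a : ℝ, a = Real.sqrt (w * (1 - u)) := ⟨_, rfl⟩
  obtain ⟨b, hbdef⟩ : ∃ b : ℝ, b = Real.sqrt (u * (1 - w)) := ⟨_, rfl⟩
  rw [← hadef, ← hbdef]
  have ha0 : 0 < a := hadef ▸ Real.sqrt_pos.mpr hA
  have hb0 : 0 < b := hbdef ▸ Real.sqrt_pos.mpr hB
  have hs0 : 0 < a + b := by linarith
  have ha2 : a ^ 2 = w * (1 - u) := by rw [hadef]; exact Real.sq_sqrt hA.le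
  have hb2 : b ^ 2 = u * (1 - w) := by rw [hbdef]; exact Real.sq_sqrt hB.le
  obtain ⟨p, hpdef⟩ : ∃ p : ℝ, p = Real.sqrt (u * w) := ⟨_, rfl⟩
  obtain ⟨q, hqdef⟩ : ∃ q : ℝ, q = Real.sqrt ((1 - u) * (1 - w)) := ⟨_, rfl⟩
  have hp0 : 0 < p := hpdef ▸ Real.sqrt_pos.mpr (by positivity)
  have hq0 : 0 < q := hqdef ▸ Real.sqrt_pos.mpr (by positivity)
  have hp2 : p ^ 2 = u * w := by rw [hpdef]; exact Real.sq_sqrt (by positivity)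
  have hq2 : q ^ 2 = (1 - u) * (1 - w) := by rw [hqdef]; exact Real.sq_sqrt (by positivity)
  have hab : a * b = p * q := by
    rw [hadef, hbdef, hpdef, hqdef, ← Real.sqrt_mul hA.le, ← Real.sqrt_mul (by positivity)]
    congr 1
    ring
  have hpq1 : p + q ≤ 1 := by
    have hpq2 : (p * q) ^ 2 = (u * (1 - u)) * (w * (1 - w)) := by
      rw [mul_pow, hp2, hq2]; ring
    have h1 : p * q ≤ (u * (1 - u) + w * (1 - w)) / 2 :=
      amgm_aux (by positivity) (by positivity) (by positivity) hpq2
    nlinarith [hp2, hq2, hp0, hq0, sq_nonneg (u - w)]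
  have hs2 : (a + b) ^ 2 = 1 - (p - q) ^ 2 := by
    linear_combination ha2 + hb2 + 2 * hab + hp2 + hq2
  -- log facts
  have hla : Real.log a = (Real.log w + Real.log (1 - u)) / 2 := by
    rw [hadef, Real.log_sqrt hA.le, Real.log_mul hw0.ne' h1u.ne']
  have hlb : Real.log b = (Real.log u + Real.log (1 - w)) / 2 := by
    rw [hbdef, Real.log_sqrt hB.le, Real.log_mul hu0.ne' h1w.ne']
  have hlp : Real.log p = (Real.log u + Real.log w) / 2 := by
    rw [hpdef, Real.log_sqrt (by positivity), Real.log_mul hu0.ne' hw0.ne']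
  have hlq : Real.log q = (Real.log (1 - u) + Real.log (1 - w)) / 2 := by
    rw [hqdef, Real.log_sqrt (by positivity), Real.log_mul h1u.ne' h1w.ne']
  obtain ⟨Lu, hLu⟩ : ∃ x : ℝ, x = Real.log u := ⟨_, rfl⟩
  obtain ⟨Lw, hLw⟩ : ∃ x : ℝ, x = Real.log w := ⟨_, rfl⟩
  obtain ⟨LU, hLU⟩ : ∃ x : ℝ, x = Real.log (1 - u) := ⟨_, rfl⟩
  obtain ⟨LW, hLW⟩ : ∃ x : ℝ, x = Real.log (1 - w) := ⟨_, rfl⟩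
  simp only [← hLu, ← hLw, ← hLU, ← hLW] at hla hlb hlp hlq
  -- core inequality instantiated
  have CORE := core p q hp0 hq0 hpq1
  rw [← hs2, hlp, hlq, Real.log_pow] at CORE
  have CORE' : 2 * (a + b) ^ 2 * Real.log (a + b) ≤
      p * (q - p) * (Lu + Lw) + q * (p - q) * (LU + LW) := by
    push_cast at CORE
    nlinarith [CORE]
  have EQ : -u * Lu - (1 - u) * LU - w * Lw - (1 - w) * LW =
      -(2 * (a + b) * a) * ((Lw + LU) / 2) - (2 * (a + b) * b) * ((Lu + LW) / 2) +
        (p * (q - p) * (Lu + Lw) + q * (p - q) * (LU + LW)) := by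
    linear_combination (Lu + LW) * hb2 + (Lw + LU) * ha2 + (Lu + Lw) * hp2 +
      (LU + LW) * hq2 + (Lu + Lw + LU + LW) * hab
  have LHSeq : 2 * (a + b) ^ 2 *
      (-(a / (a + b)) * Real.log (a / (a + b)) - b / (a + b) * Real.log (b / (a + b))) =
      -(2 * (a + b) * a) * ((Lw + LU) / 2) - (2 * (a + b) * b) * ((Lu + LW) / 2) +
        2 * (a + b) ^ 2 * Real.log (a + b) := by
    rw [Real.log_div ha0.ne' hs0.ne', Real.log_div hb0.ne' hs0.ne', hla, hlb]
    field_simp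
    ring
  have KEY : 2 * (a + b) ^ 2 *
      (-(a / (a + b)) * Real.log (a / (a + b)) - b / (a + b) * Real.log (b / (a + b))) ≤
      -u * Lu - (1 - u) * LU - w * Lw - (1 - w) * LW := by
    rw [LHSeq, EQ]
    linarith [CORE']
  -- reduce the goal to KEY
  have hlog2 : (0:ℝ) < Real.log 2 := Real.log_pos one_lt_two
  rw [ge_iff_le, ← sub_nonneg]
  have hz1 : 1 - a / (a + b) = b / (a + b) := by
    have h : a / (a + b) + b / (a + b) = 1 := by
      rw [← add_div, div_self hs0.ne']
    linarith
  have expand : H2 u + H2 w - 2 * (a + b) ^ 2 * H2 (a / (a + b)) =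
      ((-u * Lu - (1 - u) * LU - w * Lw - (1 - w) * LW) -
        2 * (a + b) ^ 2 *
          (-(a / (a + b)) * Real.log (a / (a + b)) - b / (a + b) * Real.log (b / (a + b)))) /
        Real.log 2 := by
    simp only [H2, Real.logb, hz1, ← hLu, ← hLw, ← hLU, ← hLW]
    field_simp
    ring
  rw [expand]
  exact div_nonneg (by linarith [KEY]) hlog2.le
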